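/- In the torus J = C³/Λ, the fixed locus of the order-3 element −c : (z₁,z₂,z₃) ↦ (z₃,z₁,z₂) is connected: it equals the image of the diagonal line V₁ = {(x,x,x) : x ∈ C}; equivalently, every z ∈ C³ with (z₃−z₁, z₁−z₂, z₂−z₃) ∈ Λ lies in V₁ + Λ. -/
import Mathlib


noncomputable section

def Kalpha : ℂ := (1 + Complex.I * Real.sqrt 7) / 2
def Kalphabar : ℂ := (1 - Complex.I * Real.sqrt 7) / 2

def Ke1 : Fin 3 → ℂ := ![0, Kalpha, Kalpha]
def Ke2 : Fin 3 → ℂ := ![0, 0, 2]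
def Ke3 : Fin 3 → ℂ := ![1, 1, Kalphabar]

def LambdaZ : Submodule ℤ (Fin 3 → ℂ) :=
  Submodule.span ℤ {Ke1, Ke2, Ke3, Kalpha • Ke1, Kalpha • Ke2, Kalpha • Ke3}

lemma h7c : ((Real.sqrt 7 : ℝ) : ℂ)^2 = 7 := by
  rw [← Complex.ofReal_pow, Real.sq_sqrt (by norm_num : (7:ℝ) ≥ 0)]
  norm_num

lemma hbar : Kalphabar = 1 - Kalpha := by unfold Kalpha Kalphabar; ring

lemma hsq : Kalpha ^ 2 = Kalpha - 2 := by
  unfold Kalpha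
  linear_combination (Complex.I^2/4) * h7c + (7/4) * Complex.I_sq

lemma hconj : starRingEnd ℂ Kalpha = Kalphabar := by
  unfold Kalpha Kalphabar
  rw [map_div₀, map_add, map_one, map_mul, Complex.conj_I, Complex.conj_ofReal, map_ofNat]
  ring

lemma hne : Kalpha - Kalphabar ≠ 0 := by
  have h : Kalpha - Kalphabar = Complex.I * Real.sqrt 7 := by unfold Kalpha Kalphabar; ring
  rw [h]
  apply mul_ne_zero Complex.I_ne_zero
  simpa using Real.sqrt_ne_zero'.mpr (by norm_num : (0:ℝ) < 7)

lemma mem_combo (a b c d f g : ℤ) :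
    a • Ke1 + b • Ke2 + c • Ke3 + d • (Kalpha • Ke1) + f • (Kalpha • Ke2)
      + g • (Kalpha • Ke3) ∈ LambdaZ := by
  have m1 : Ke1 ∈ LambdaZ := Submodule.subset_span (by simp)
  have m2 : Ke2 ∈ LambdaZ := Submodule.subset_span (by simp)
  have m3 : Ke3 ∈ LambdaZ := Submodule.subset_span (by simp)
  have m4 : Kalpha • Ke1 ∈ LambdaZ := Submodule.subset_span (by simp)
  have m5 : Kalpha • Ke2 ∈ LambdaZ := Submodule.subset_span (by simp)
  have m6 : Kalpha • Ke3 ∈ LambdaZ := Submodule.subset_span (by simp)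
  exact add_mem (add_mem (add_mem (add_mem (add_mem (Submodule.smul_mem _ a m1)
    (Submodule.smul_mem _ b m2)) (Submodule.smul_mem _ c m3)) (Submodule.smul_mem _ d m4))
    (Submodule.smul_mem _ f m5)) (Submodule.smul_mem _ g m6)

lemma mem_lambda (w : Fin 3 → ℂ) (hw : w ∈ LambdaZ) :
    ∃ a b c d f g : ℤ, w = a • Ke1 + b • Ke2 + c • Ke3 + d • (Kalpha • Ke1)
      + f • (Kalpha • Ke2) + g • (Kalpha • Ke3) := by
  induction hw using Submodule.span_induction with
  | mem x hx =>
    simp only [Set.mem_insert_iff, Set.mem_singleton_iff] at hx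
    rcases hx with rfl | rfl | rfl | rfl | rfl | rfl
    · exact ⟨1,0,0,0,0,0, by module⟩
    · exact ⟨0,1,0,0,0,0, by module⟩
    · exact ⟨0,0,1,0,0,0, by module⟩
    · exact ⟨0,0,0,1,0,0, by module⟩
    · exact ⟨0,0,0,0,1,0, by module⟩
    · exact ⟨0,0,0,0,0,1, by module⟩
  | zero => exact ⟨0,0,0,0,0,0, by module⟩
  | add u v _ _ hu hv =>
    obtain ⟨a,b,c,d,f,g,rfl⟩ := hu
    obtain ⟨a',b',c',d',f',g',rfl⟩ := hv
    exact ⟨a+a', b+b', c+c', d+d', f+f', g+g', by push_cast [add_smul]; module⟩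
  | smul r u _ hu =>
    obtain ⟨a,b,c,d,f,g,rfl⟩ := hu
    exact ⟨r*a, r*b, r*c, r*d, r*f, r*g, by push_cast [mul_smul]; module⟩

lemma sigma_mem (u : Fin 3 → ℂ) (hu : u ∈ LambdaZ) :
    ![u 2 - u 0, u 0 - u 1, u 1 - u 2] ∈ LambdaZ := by
  induction hu using Submodule.span_induction with
  | mem x hx =>
    simp only [Set.mem_insert_iff, Set.mem_singleton_iff] at hx
    rcases hx with rfl | rfl | rfl | rfl | rfl | rfl
    · rw [show ![Ke1 2 - Ke1 0, Ke1 0 - Ke1 1, Ke1 1 - Ke1 2]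
          = (-2:ℤ) • Ke1 + (-1:ℤ) • Ke2 + (0:ℤ) • Ke3 + (0:ℤ) • (Kalpha • Ke1)
            + (1:ℤ) • (Kalpha • Ke2) + (1:ℤ) • (Kalpha • Ke3) from ?_]
      · exact mem_combo _ _ _ _ _ _
      funext i; fin_cases i <;>
        simp [Ke1, Ke2, Ke3] <;> (try rw [hbar]) <;>
          first
          | ring1
          | linear_combination hsq
          | linear_combination (-1:ℂ)*hsq
          | linear_combination (2:ℂ)*hsq
          | linear_combination (-2:ℂ)*hsq
          | linear_combination (3:ℂ)*hsq
          | linear_combination (-3:ℂ)*hsq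
    · rw [show ![Ke2 2 - Ke2 0, Ke2 0 - Ke2 1, Ke2 1 - Ke2 2]
          = (-1:ℤ) • Ke1 + (-1:ℤ) • Ke2 + (2:ℤ) • Ke3 + (1:ℤ) • (Kalpha • Ke1)
            + (1:ℤ) • (Kalpha • Ke2) + (0:ℤ) • (Kalpha • Ke3) from ?_]
      · exact mem_combo _ _ _ _ _ _
      funext i; fin_cases i <;>
        simp [Ke1, Ke2, Ke3] <;> (try rw [hbar]) <;>
          first
          | ring1
          | linear_combination hsq
          | linear_combination (-1:ℂ)*hsq
          | linear_combination (2:ℂ)*hsq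
          | linear_combination (-2:ℂ)*hsq
          | linear_combination (3:ℂ)*hsq
          | linear_combination (-3:ℂ)*hsq
    · rw [show ![Ke3 2 - Ke3 0, Ke3 0 - Ke3 1, Ke3 1 - Ke3 2]
          = (1:ℤ) • Ke1 + (1:ℤ) • Ke2 + (0:ℤ) • Ke3 + (0:ℤ) • (Kalpha • Ke1)
            + (0:ℤ) • (Kalpha • Ke2) + (-1:ℤ) • (Kalpha • Ke3) from ?_]
      · exact mem_combo _ _ _ _ _ _
      funext i; fin_cases i <;>
        simp [Ke1, Ke2, Ke3] <;> (try rw [hbar]) <;>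
          first
          | ring1
          | linear_combination hsq
          | linear_combination (-1:ℂ)*hsq
          | linear_combination (2:ℂ)*hsq
          | linear_combination (-2:ℂ)*hsq
          | linear_combination (3:ℂ)*hsq
          | linear_combination (-3:ℂ)*hsq
    · rw [show ![(Kalpha • Ke1) 2 - (Kalpha • Ke1) 0, (Kalpha • Ke1) 0 - (Kalpha • Ke1) 1,
            (Kalpha • Ke1) 1 - (Kalpha • Ke1) 2]
          = (0:ℤ) • Ke1 + (-2:ℤ) • Ke2 + (-2:ℤ) • Ke3 + (-2:ℤ) • (Kalpha • Ke1)
            + (0:ℤ) • (Kalpha • Ke2) + (1:ℤ) • (Kalpha • Ke3) from ?_]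
      · exact mem_combo _ _ _ _ _ _
      funext i; fin_cases i <;>
        simp [Ke1, Ke2, Ke3] <;> (try rw [hbar]) <;>
          first
          | ring1
          | linear_combination hsq
          | linear_combination (-1:ℂ)*hsq
          | linear_combination (2:ℂ)*hsq
          | linear_combination (-2:ℂ)*hsq
          | linear_combination (3:ℂ)*hsq
          | linear_combination (-3:ℂ)*hsq
    · rw [show ![(Kalpha • Ke2) 2 - (Kalpha • Ke2) 0, (Kalpha • Ke2) 0 - (Kalpha • Ke2) 1,
            (Kalpha • Ke2) 1 - (Kalpha • Ke2) 2]
          = (-2:ℤ) • Ke1 + (-2:ℤ) • Ke2 + (0:ℤ) • Ke3 + (0:ℤ) • (Kalpha • Ke1)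
            + (0:ℤ) • (Kalpha • Ke2) + (2:ℤ) • (Kalpha • Ke3) from ?_]
      · exact mem_combo _ _ _ _ _ _
      funext i; fin_cases i <;>
        simp [Ke1, Ke2, Ke3] <;> (try rw [hbar]) <;>
          first
          | ring1
          | linear_combination hsq
          | linear_combination (-1:ℂ)*hsq
          | linear_combination (2:ℂ)*hsq
          | linear_combination (-2:ℂ)*hsq
          | linear_combination (3:ℂ)*hsq
          | linear_combination (-3:ℂ)*hsq
    · rw [show ![(Kalpha • Ke3) 2 - (Kalpha • Ke3) 0, (Kalpha • Ke3) 0 - (Kalpha • Ke3) 1,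
            (Kalpha • Ke3) 1 - (Kalpha • Ke3) 2]
          = (0:ℤ) • Ke1 + (0:ℤ) • Ke2 + (2:ℤ) • Ke3 + (1:ℤ) • (Kalpha • Ke1)
            + (1:ℤ) • (Kalpha • Ke2) + (-1:ℤ) • (Kalpha • Ke3) from ?_]
      · exact mem_combo _ _ _ _ _ _
      funext i; fin_cases i <;>
        simp [Ke1, Ke2, Ke3] <;> (try rw [hbar]) <;>
          first
          | ring1
          | linear_combination hsq
          | linear_combination (-1:ℂ)*hsq
          | linear_combination (2:ℂ)*hsq
          | linear_combination (-2:ℂ)*hsq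
          | linear_combination (3:ℂ)*hsq
          | linear_combination (-3:ℂ)*hsq
  | zero =>
    have : ![(0:(Fin 3 → ℂ)) 2 - (0:(Fin 3 → ℂ)) 0, (0:(Fin 3 → ℂ)) 0 - (0:(Fin 3 → ℂ)) 1,
        (0:(Fin 3 → ℂ)) 1 - (0:(Fin 3 → ℂ)) 2] = (0 : Fin 3 → ℂ) := by
      funext i; fin_cases i <;> simp
    rw [this]; exact zero_mem _
  | add u v _ _ hu hv =>
    have : ![(u+v) 2 - (u+v) 0, (u+v) 0 - (u+v) 1, (u+v) 1 - (u+v) 2]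
        = ![u 2 - u 0, u 0 - u 1, u 1 - u 2] + ![v 2 - v 0, v 0 - v 1, v 1 - v 2] := by
      funext i; fin_cases i <;> simp <;> ring
    rw [this]; exact add_mem hu hv
  | smul r u _ hu =>
    have : ![(r • u) 2 - (r • u) 0, (r • u) 0 - (r • u) 1, (r • u) 1 - (r • u) 2]
        = r • ![u 2 - u 0, u 0 - u 1, u 1 - u 2] := by
      funext i; fin_cases i <;> simp <;> ring
    rw [this]; exact Submodule.smul_mem _ r hu

/-- The fixed locus in `J = ℂ³/Λ` of the order-3 element
`-c : (z₁,z₂,z₃) ↦ (z₃,z₁,z₂)` is connected: it is the image of the diagonal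
`V₁ = {(x,x,x)}`; i.e. `(z₃-z₁, z₁-z₂, z₂-z₃) ∈ Λ` iff `z ∈ V₁ + Λ`. -/
theorem fixed_locus_of_order_three :
    ∀ z : Fin 3 → ℂ,
      (![z 2 - z 0, z 0 - z 1, z 1 - z 2] ∈ LambdaZ) ↔
      (∃ x : ℂ, z - x • ![1,1,1] ∈ LambdaZ) := by
  intro z
  constructor
  · intro hz
    obtain ⟨a, b, c, d, f, g, hw⟩ := mem_lambda _ hz
    have hw0 := congrFun hw 0
    have hw1 := congrFun hw 1
    have hw2 := congrFun hw 2
    simp [Ke1, Ke2, Ke3] at hw0 hw1 hw2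
    have key : ((2*b+3*c-4*d+2*g : ℤ) : ℂ) + ((2*a-c+2*d+2*f+2*g : ℤ) : ℂ) * Kalpha = 0 := by
      push_cast
      linear_combination (-1:ℂ) * hw0 - hw1 - hw2 + ((g:ℂ) - 2*(d:ℂ)) * hsq
        + (-(c:ℂ) - (g:ℂ) * Kalpha) * hbar
    have key2 : ((2*b+3*c-4*d+2*g : ℤ) : ℂ) + ((2*a-c+2*d+2*f+2*g : ℤ) : ℂ) * Kalphabar = 0 := by
      have h := congrArg (starRingEnd ℂ) key
      simpa [map_add, map_mul, map_intCast, map_ofNat, hconj] using h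
    have hn : (2*a-c+2*d+2*f+2*g : ℤ) = 0 := by
      have h : ((2*a-c+2*d+2*f+2*g : ℤ) : ℂ) * (Kalpha - Kalphabar) = 0 := by
        linear_combination key - key2
      rcases mul_eq_zero.mp h with h' | h'
      · exact_mod_cast h'
      · exact absurd h' hne
    obtain ⟨c', hc'⟩ : ∃ c', c = 2 * c' := ⟨a + d + f + g, by omega⟩
    have hc'c : (c : ℂ) = 2 * (c' : ℂ) := by exact_mod_cast hc'
    have hnc : 2*(a:ℂ) - (c:ℂ) + 2*(d:ℂ) + 2*(f:ℂ) + 2*(g:ℂ) = 0 := by exact_mod_cast hn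
    refine ⟨z 0 - ((-c' + f - g : ℤ) : ℂ), ?_⟩
    rw [show z - (z 0 - ((-c' + f - g : ℤ) : ℂ)) • ![1,1,1]
        = (-2*c'+d+f : ℤ) • Ke1 + (2*c'-d : ℤ) • Ke2 + (-c'+f-g : ℤ) • Ke3
          + (c'-d : ℤ) • (Kalpha • Ke1) + (0 : ℤ) • (Kalpha • Ke2)
          + (0 : ℤ) • (Kalpha • Ke3) from ?_]
    · exact mem_combo _ _ _ _ _ _
    funext i
    fin_cases i <;> simp [Ke1, Ke2, Ke3] <;> push_cast
    · linear_combination (-1:ℂ) * hw1 + (-(c':ℂ)) * hsq + (-1 - Kalpha/2) * hc'c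
        + (-(Kalpha)/2) * hnc
    · linear_combination hw0 + ((c':ℂ) - (f:ℂ) + (g:ℂ)) * hbar + ((d:ℂ) - (c':ℂ)) * hsq + hc'c
  · rintro ⟨x, hx⟩
    obtain ⟨u, hu, hmem⟩ : ∃ u : Fin 3 → ℂ, u = z - x • ![1,1,1] ∧ u ∈ LambdaZ := ⟨_, rfl, hx⟩
    have h := sigma_mem u hmem
    have he : ![z 2 - z 0, z 0 - z 1, z 1 - z 2] = ![u 2 - u 0, u 0 - u 1, u 1 - u 2] := by
      subst hu
      funext i; fin_cases i <;> simp <;> ring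
    rw [he]
    exact h


end
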